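/- For every n ≥ 4 and every pair (i, k) with 1 ≤ i ≤ n-2 and i - k odd, the multiset of Laurent monomials {m(p) : p ∈ 𝒫_{i,k}} contains exactly one dominant monomial, namely Y_{i,k} (a product of nonnegative powers of the variables Y), and exactly one anti-dominant monomial, namely Y^{-1}_{i, 2n-2+k}; the dominant monomial arises from the unique highest path p⁺_{i,k} and the anti-dominant monomial from the unique lowest path p⁻_{i,k}. -/
import Mathlib


/-- Exponent vectors of Laurent monomials in the variables `Y_{j,ℓ}` (`j` a node of the
Dynkin diagram, `ℓ ∈ ℤ` a spectral parameter). -/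
abbrev ExpVec : Type := (ℕ × ℤ) →₀ ℤ

/-- Extend a finite integer sequence to `ℕ` by junk value `0` out of range. -/
def seqOf {n : ℕ} (y : Fin n → ℤ) : ℕ → ℤ := fun m => if h : m < n then y ⟨m, h⟩ else 0

/-- `y` is a lattice path: consecutive entries differ by `±1`. -/
def IsPM {n : ℕ} (y : Fin n → ℤ) : Prop :=
  ∀ j : ℕ, j + 1 < n → (seqOf y (j + 1) = seqOf y j + 1 ∨ seqOf y (j + 1) = seqOf y j - 1)

/-- A path in `𝒫_{i,k}` (for `i ≤ n-2`): a left half-path `L` on `x = 0, …, n-1` with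
`L 0 = i + k`, and a right half-path `R` on `x = n-1, …, 2n-2` with
`R (n-1) = 2n-2-i+k`, each with `±1` steps, the left endpoint weakly above the right
start at the fold `x = n-1` (heights measured downwards, so "above" is `≥` is reversed:
the condition is `R 0 ≤ L (n-1)` in the row-label coordinates of the paper). -/
def PathCond (n i : ℕ) (k : ℤ) (LR : (Fin n → ℤ) × (Fin n → ℤ)) : Prop :=
  IsPM LR.1 ∧ IsPM LR.2 ∧ seqOf LR.1 0 = (i : ℤ) + k ∧
    seqOf LR.2 (n - 1) = 2 * (n : ℤ) - 2 - (i : ℤ) + k ∧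
    seqOf LR.2 0 ≤ seqOf LR.1 (n - 1)

/-- Corner sign of a path at position `r`: `+1` for an upper corner
(`y_{r-1} = y_r + 1 = y_{r+1}`), `-1` for a lower corner, `0` otherwise. -/
def cornerSign (f : ℕ → ℤ) (r : ℕ) : ℤ :=
  if f (r - 1) = f r + 1 ∧ f (r + 1) = f r + 1 then 1
  else if f (r - 1) = f r - 1 ∧ f (r + 1) = f r - 1 then -1 else 0

/-- The non-fold part of the exponent vector of `m(p)`: the product over the corners of
`p` away from `x = n-1` of `Y_{j̄,ℓ}^{±1}` (node `r` on the left half, node `n-1-t` on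
the right half, spectral parameter the height of the corner). -/
noncomputable def baseMon (n : ℕ) (LR : (Fin n → ℤ) × (Fin n → ℤ)) : ExpVec :=
  (∑ r ∈ Finset.Icc 1 (n - 2),
      cornerSign (seqOf LR.1) r • Finsupp.single (r, seqOf LR.1 r) (1 : ℤ)) +
  (∑ t ∈ Finset.Icc 1 (n - 2),
      cornerSign (seqOf LR.2) t • Finsupp.single (n - 1 - t, seqOf LR.2 t) (1 : ℤ))

/-- The fold factor `Z` of `m(p)` (Equation (5) of the paper), as a multiset of exponent
vectors: a single monomial in the coincident cases (5), (6) and the straight-through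
case, and a binomial (two monomials) in the separated cases (1)–(4), with the
distribution of the nodes `n-1`, `n` over the two fold heights governed by
`(ℓ₂ - ℓ₁) mod 4` and the travelling direction of the path. -/
noncomputable def zMon (n : ℕ) (LR : (Fin n → ℤ) × (Fin n → ℤ)) : Multiset ExpVec :=
  let L := seqOf LR.1
  let R := seqOf LR.2
  let h₁ := L (n - 1)
  let h₂ := R 0
  let d₁ := h₁ - L (n - 2)
  let d₂ := R 1 - h₂
  if h₁ = h₂ then
    (if d₁ = -1 ∧ d₂ = 1 then
        {Finsupp.single (n - 1, h₁) (1 : ℤ) + Finsupp.single (n, h₁) (1 : ℤ)}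
      else if d₁ = 1 ∧ d₂ = -1 then
        {-(Finsupp.single (n - 1, h₁) (1 : ℤ)) - Finsupp.single (n, h₁) (1 : ℤ)}
      else ({0} : Multiset ExpVec))
  else
    (if (d₁ = d₂ ∧ (h₁ - h₂) % 4 = 2) ∨ (d₁ ≠ d₂ ∧ (h₁ - h₂) % 4 = 0) then
        {d₂ • Finsupp.single (n - 1, h₂) (1 : ℤ) + (-d₁) • Finsupp.single (n, h₁) (1 : ℤ),
         d₂ • Finsupp.single (n, h₂) (1 : ℤ) + (-d₁) • Finsupp.single (n - 1, h₁) (1 : ℤ)}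
      else
        {d₂ • Finsupp.single (n - 1, h₂) (1 : ℤ) + (-d₁) • Finsupp.single (n - 1, h₁) (1 : ℤ),
         d₂ • Finsupp.single (n, h₂) (1 : ℤ) + (-d₁) • Finsupp.single (n, h₁) (1 : ℤ)})

/-- The multiset of exponent vectors of the Laurent monomials of `m(p)` (one element for
a monomial, two for a binomial). -/
noncomputable def mMon (n : ℕ) (LR : (Fin n → ℤ) × (Fin n → ℤ)) : Multiset ExpVec :=
  (zMon n LR).map (fun z => baseMon n LR + z)

/-- A monomial is dominant iff all exponents are nonnegative. -/
def Dominant (e : ExpVec) : Prop := ∀ x, 0 ≤ e x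

/-- A monomial is anti-dominant iff all exponents are nonpositive. -/
def AntiDominant (e : ExpVec) : Prop := ∀ x, e x ≤ 0


lemma aux_seqOf_lt {n : ℕ} (y : Fin n → ℤ) {m : ℕ} (h : m < n) :
    seqOf y m = y ⟨m, h⟩ := by simp [seqOf, h]

/-- corner sign is -1 given it's a local max in a range where it's the max. -/
lemma aux_corner_neg (f : ℕ → ℤ) (x : ℕ) (h1 : f (x-1) = f x - 1) (h2 : f (x+1) = f x - 1) :
    cornerSign f x = -1 := by
  unfold cornerSign
  rw [if_neg, if_pos ⟨h1, h2⟩]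
  omega

lemma aux_corner_pos (f : ℕ → ℤ) (x : ℕ) (h1 : f (x-1) = f x + 1) (h2 : f (x+1) = f x + 1) :
    cornerSign f x = 1 := by
  unfold cornerSign
  rw [if_pos ⟨h1, h2⟩]

lemma aux_corner_zero (f : ℕ → ℤ) (x : ℕ) (h1 : ¬(f (x-1) = f x + 1 ∧ f (x+1) = f x + 1))
    (h2 : ¬(f (x-1) = f x - 1 ∧ f (x+1) = f x - 1)) :
    cornerSign f x = 0 := by
  unfold cornerSign
  rw [if_neg h1, if_neg h2]

lemma aux_corner_cases (f : ℕ → ℤ) (x : ℕ) :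
    cornerSign f x = 1 ∧ f (x-1) = f x + 1 ∧ f (x+1) = f x + 1
    ∨ cornerSign f x = -1 ∧ f (x-1) = f x - 1 ∧ f (x+1) = f x - 1
    ∨ cornerSign f x = 0 := by
  unfold cornerSign
  by_cases h1 : f (x-1) = f x + 1 ∧ f (x+1) = f x + 1
  · exact Or.inl ⟨by rw [if_pos h1], h1.1, h1.2⟩
  by_cases h2 : f (x-1) = f x - 1 ∧ f (x+1) = f x - 1
  · exact Or.inr (Or.inl ⟨by rw [if_neg h1, if_pos h2], h2.1, h2.2⟩)
  · exact Or.inr (Or.inr (by rw [if_neg h1, if_neg h2]))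

lemma aux_two_corner (f : ℕ → ℤ) (x : ℕ)
    (h1 : f x = f (x-1) + 1 ∨ f x = f (x-1) - 1)
    (h2 : f (x+1) = f x + 1 ∨ f (x+1) = f x - 1) :
    2 * cornerSign f x = (f (x+1) - f x) - (f x - f (x-1)) := by
  rcases h1 with h1 | h1 <;> rcases h2 with h2 | h2
  · rw [aux_corner_zero f x (by omega) (by omega)]; omega
  · rw [aux_corner_neg f x (by omega) (by omega)]; omega
  · rw [aux_corner_pos f x (by omega) (by omega)]; omega
  · rw [aux_corner_zero f x (by omega) (by omega)]; omega

lemma aux_max (f : ℕ → ℤ) (a b : ℕ) (hab : a ≤ b) :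
    ∃ t, a ≤ t ∧ t ≤ b ∧ ∀ s, a ≤ s → s ≤ b → f s ≤ f t := by
  obtain ⟨t, ht, hmax⟩ := Finset.exists_max_image (Finset.Icc a b) f ⟨a, by simp [hab]⟩
  simp only [Finset.mem_Icc] at ht
  exact ⟨t, ht.1, ht.2, fun s h1 h2 => hmax s (Finset.mem_Icc.mpr ⟨h1, h2⟩)⟩

lemma aux_shape (N : ℕ) (f : ℕ → ℤ)
    (hstep : ∀ x, x + 1 ≤ N → f (x+1) = f x + 1 ∨ f (x+1) = f x - 1)
    (hnl : ∀ j, 1 ≤ j → j + 1 ≤ N → ¬(f j = f (j-1) + 1 ∧ f (j+1) = f j - 1)) :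
    ∃ a, a ≤ N ∧ (∀ x, x ≤ a → f x = f 0 - x) ∧
      (∀ x, a ≤ x → x ≤ N → f x = f 0 - 2*(a:ℤ) + x) := by
  by_cases hup : ∃ x, x + 1 ≤ N ∧ f (x+1) = f x + 1
  · set a := Nat.find hup with ha
    obtain ⟨haN, haup⟩ := Nat.find_spec hup
    have hmin : ∀ x, x < a → ¬(x + 1 ≤ N ∧ f (x+1) = f x + 1) := fun x hx => Nat.find_min hup hx
    have hdown : ∀ x, x < a → f (x+1) = f x - 1 := by
      intro x hx
      have hxN : x + 1 ≤ N := by omega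
      rcases hstep x hxN with h | h
      · exact absurd ⟨hxN, h⟩ (hmin x hx)
      · exact h
    have hupall : ∀ x, a ≤ x → x + 1 ≤ N → f (x+1) = f x + 1 := by
      intro x hx
      induction x, hx using Nat.le_induction with
      | base => intro _; exact haup
      | succ y hy ih =>
        intro hyN
        have h1 : f (y+1) = f y + 1 := ih (by omega)
        have := hnl (y+1) (by omega) (by omega)
        simp only [Nat.add_sub_cancel] at this
        rcases hstep (y+1) hyN with h | h
        · exact h
        · exact absurd ⟨h1, h⟩ this
    have hdval : ∀ x, x ≤ a → f x = f 0 - x := by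
      intro x hx
      induction x with
      | zero => simp
      | succ y ih =>
        have := hdown y (by omega)
        rw [this, ih (by omega)]; push_cast; ring
    refine ⟨a, by omega, hdval, ?_⟩
    intro x hx hxN
    induction x, hx using Nat.le_induction with
    | base =>
      rw [hdval a le_rfl]; ring
    | succ y hy ih =>
      have := hupall y hy (by omega)
      rw [this, ih (by omega)]; push_cast; ring
  · push_neg at hup
    have hdown : ∀ x, x + 1 ≤ N → f (x+1) = f x - 1 := by
      intro x hx
      rcases hstep x hx with h | h
      · exact absurd h (hup x hx)
      · exact h
    have hval : ∀ x, x ≤ N → f x = f 0 - x := by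
      intro x hx
      induction x with
      | zero => simp
      | succ y ih =>
        rw [hdown y hx, ih (by omega)]; push_cast; ring
    refine ⟨N, le_refl N, fun x hx => hval x hx, fun x hx hxN => ?_⟩
    have hxn : x = N := le_antisymm hxN hx
    rw [hxn, hval N le_rfl]; push_cast; ring

lemma aux_base_apply (n : ℕ) (LR : (Fin n → ℤ) × (Fin n → ℤ)) (j : ℕ) (ℓ : ℤ)
    (hj1 : 1 ≤ j) (hj2 : j ≤ n-2) :
    (baseMon n LR) (j, ℓ) =
      (if seqOf LR.1 j = ℓ then cornerSign (seqOf LR.1) j else 0) +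
      (if seqOf LR.2 (n-1-j) = ℓ then cornerSign (seqOf LR.2) (n-1-j) else 0) := by
  unfold baseMon
  rw [Finsupp.add_apply, Finsupp.finset_sum_apply, Finsupp.finset_sum_apply]
  simp only [Finsupp.smul_apply, Finsupp.single_apply, smul_eq_mul]
  congr 1
  · rw [Finset.sum_eq_single_of_mem j (Finset.mem_Icc.mpr ⟨hj1, hj2⟩)]
    · by_cases h : seqOf LR.1 j = ℓ
      · rw [if_pos (by rw [h]), if_pos h, mul_one]
      · rw [if_neg (by simp [Prod.ext_iff]; tauto), if_neg h, mul_zero]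
    · intro r hr hrj
      rw [if_neg (by simp [Prod.ext_iff]; tauto), mul_zero]
  · rw [Finset.sum_eq_single_of_mem (n-1-j) (Finset.mem_Icc.mpr ⟨by omega, by omega⟩)]
    · have hjj : n-1-(n-1-j) = j := by omega
      rw [hjj]
      by_cases h : seqOf LR.2 (n-1-j) = ℓ
      · rw [if_pos (by rw [h]), if_pos h, mul_one]
      · rw [if_neg (by simp [Prod.ext_iff]; tauto), if_neg h, mul_zero]
    · intro r hr hrj
      simp only [Finset.mem_Icc] at hr
      have : ¬ (n-1-r = j) := by omega
      rw [if_neg (by simp [Prod.ext_iff]; tauto), mul_zero]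

lemma aux_base_apply_high (n : ℕ) (LR : (Fin n → ℤ) × (Fin n → ℤ)) (j : ℕ) (ℓ : ℤ)
    (hj : n-1 ≤ j) (hn : 2 ≤ n) :
    (baseMon n LR) (j, ℓ) = 0 := by
  unfold baseMon
  rw [Finsupp.add_apply, Finsupp.finset_sum_apply, Finsupp.finset_sum_apply]
  simp only [Finsupp.smul_apply, Finsupp.single_apply, smul_eq_mul]
  rw [Finset.sum_eq_zero, Finset.sum_eq_zero, add_zero]
  · intro r hr
    simp only [Finset.mem_Icc] at hr
    have : ¬ (n-1-r = j) := by omega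
    rw [if_neg (by simp [Prod.ext_iff]; tauto), mul_zero]
  · intro r hr
    simp only [Finset.mem_Icc] at hr
    have : ¬ (r = j) := by omega
    rw [if_neg (by simp [Prod.ext_iff]; tauto), mul_zero]

lemma aux_mem_pair {α : Type*} {z a b : α} (h : z ∈ ({a, b} : Multiset α)) : z = a ∨ z = b := by
  simpa using h

lemma aux_z_apply_low (n : ℕ) (LR : (Fin n → ℤ) × (Fin n → ℤ)) (z : ExpVec)
    (hz : z ∈ zMon n LR) (j : ℕ) (ℓ : ℤ) (hj : j ≤ n-2) (hn : 2 ≤ n) :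
    z (j, ℓ) = 0 := by
  have h1 : ¬ ((n-1 : ℕ) = j) := by omega
  have h2 : ¬ ((n : ℕ) = j) := by omega
  unfold zMon at hz
  dsimp only at hz
  split_ifs at hz
  pick_goal 4
  · rcases aux_mem_pair hz with hz | hz <;> subst hz <;>
      simp [Finsupp.single_apply, Prod.ext_iff, h1, h2]
  pick_goal 4
  · rcases aux_mem_pair hz with hz | hz <;> subst hz <;>
      simp [Finsupp.single_apply, Prod.ext_iff, h1, h2]
  all_goals rw [Multiset.mem_singleton] at hz
  all_goals subst hz
  all_goals simp [Finsupp.single_apply, Prod.ext_iff, h1, h2]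

lemma aux_z_nonneg (n : ℕ) (hn : 4 ≤ n) (LR : (Fin n → ℤ) × (Fin n → ℤ)) (z : ExpVec)
    (hz : z ∈ zMon n LR) (e : ExpVec) (he : e = baseMon n LR + z) (hdom : Dominant e)
    (m : ℕ) (ℓ : ℤ) (hm : n-1 ≤ m) : 0 ≤ z (m, ℓ) := by
  have := hdom (m, ℓ)
  rw [he, Finsupp.add_apply, aux_base_apply_high n LR m ℓ hm (by omega), zero_add] at this
  exact this

lemma aux_z_dom (n : ℕ) (hn : 4 ≤ n) (LR : (Fin n → ℤ) × (Fin n → ℤ)) (z : ExpVec)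
    (hz : z ∈ zMon n LR) (e : ExpVec) (he : e = baseMon n LR + z) (hdom : Dominant e)
    (hd1 : seqOf LR.1 (n-1) - seqOf LR.1 (n-2) = 1 ∨ seqOf LR.1 (n-1) - seqOf LR.1 (n-2) = -1)
    (hd2 : seqOf LR.2 1 - seqOf LR.2 0 = 1 ∨ seqOf LR.2 1 - seqOf LR.2 0 = -1) :
    (seqOf LR.1 (n-1) = seqOf LR.2 0 ∧
      ¬(seqOf LR.1 (n-1) - seqOf LR.1 (n-2) = 1 ∧ seqOf LR.2 1 - seqOf LR.2 0 = -1)) ∨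
    (seqOf LR.1 (n-1) ≠ seqOf LR.2 0 ∧ seqOf LR.1 (n-1) - seqOf LR.1 (n-2) = -1 ∧
      seqOf LR.2 1 - seqOf LR.2 0 = 1) := by
  have hpos := aux_z_nonneg n hn LR z hz e he hdom
  have hne : ((n:ℕ)-1) ≠ n := by omega
  have hne' : (n:ℕ) ≠ n-1 := by omega
  unfold zMon at hz
  dsimp only at hz
  split_ifs at hz with hc hb1 hb2 hsep
  · exact Or.inl ⟨hc, by omega⟩
  · exfalso
    rw [Multiset.mem_singleton] at hz
    have := hpos (n-1) (seqOf LR.1 (n-1)) le_rfl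
    rw [hz] at this
    simp [Finsupp.single_apply, Prod.ext_iff, hne, hne'] at this
  · exact Or.inl ⟨hc, hb2⟩
  · refine Or.inr ⟨hc, ?_⟩
    rcases aux_mem_pair hz with hz | hz <;> subst hz
    · have t1 := hpos (n-1) (seqOf LR.2 0) le_rfl
      have t2 := hpos n (seqOf LR.1 (n-1)) (by omega)
      simp [Finsupp.single_apply, Prod.ext_iff, hne, hne'] at t1 t2
      omega
    · have t1 := hpos n (seqOf LR.2 0) (by omega)
      have t2 := hpos (n-1) (seqOf LR.1 (n-1)) le_rfl
      simp [Finsupp.single_apply, Prod.ext_iff, hne, hne'] at t1 t2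
      omega
  · refine Or.inr ⟨hc, ?_⟩
    rcases aux_mem_pair hz with hz | hz <;> subst hz
    · have t1 := hpos (n-1) (seqOf LR.2 0) le_rfl
      have t2 := hpos (n-1) (seqOf LR.1 (n-1)) le_rfl
      simp [Finsupp.single_apply, Prod.ext_iff, hne, hne', Ne.symm hc] at t1 t2
      omega
    · have t1 := hpos n (seqOf LR.2 0) (by omega)
      have t2 := hpos n (seqOf LR.1 (n-1)) (by omega)
      simp [Finsupp.single_apply, Prod.ext_iff, hne, hne', Ne.symm hc] at t1 t2
      omega

lemma aux_corner_neg_elim (f : ℕ → ℤ) (x : ℕ) (h : cornerSign f x = -1) :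
    f (x-1) = f x - 1 ∧ f (x+1) = f x - 1 := by
  rcases aux_corner_cases f x with ⟨h1, _, _⟩ | ⟨h1, h2, h3⟩ | h1
  · omega
  · exact ⟨h2, h3⟩
  · omega

lemma aux_corner_pos_elim (f : ℕ → ℤ) (x : ℕ) (h : cornerSign f x = 1) :
    f (x-1) = f x + 1 ∧ f (x+1) = f x + 1 := by
  rcases aux_corner_cases f x with ⟨h1, h2, h3⟩ | ⟨h1, _, _⟩ | h1
  · exact ⟨h2, h3⟩
  · omega
  · omega

lemma aux_corner_bound (f : ℕ → ℤ) (x : ℕ) :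
    -1 ≤ cornerSign f x ∧ cornerSign f x ≤ 1 := by
  rcases aux_corner_cases f x with ⟨h1, _, _⟩ | ⟨h1, _, _⟩ | h1 <;> omega

def auxV (n : ℕ) (f g : ℕ → ℤ) (x : ℕ) : ℤ :=
  (f (x+1) - f x) - (g (n-1-x) - g (n-2-x))

lemma aux_core (n i : ℕ) (k : ℤ) (hn : 4 ≤ n) (hi1 : 1 ≤ i) (hi2 : i ≤ n-2)
    (f g : ℕ → ℤ)
    (hfs : ∀ x, x+1 ≤ n-1 → f (x+1) = f x + 1 ∨ f (x+1) = f x - 1)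
    (hgs : ∀ x, x+1 ≤ n-1 → g (x+1) = g x + 1 ∨ g (x+1) = g x - 1)
    (hf0 : f 0 = (i:ℤ) + k)
    (hgN : g (n-1) = 2*(n:ℤ) - 2 - i + k)
    (hfold : g 0 ≤ f (n-1))
    (hP : ∀ j : ℕ, ∀ ℓ : ℤ, 1 ≤ j → j ≤ n-2 →
      0 ≤ (if f j = ℓ then cornerSign f j else 0) +
          (if g (n-1-j) = ℓ then cornerSign g (n-1-j) else 0))
    (hz : (f (n-1) = g 0 ∧ ¬(f (n-1) - f (n-2) = 1 ∧ g 1 - g 0 = -1)) ∨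
          (f (n-1) ≠ g 0 ∧ f (n-1) - f (n-2) = -1 ∧ g 1 - g 0 = 1)) :
    (∀ x, x ≤ n-1 → f x = k + |(x:ℤ) - i|) ∧
    (∀ t, t ≤ n-1 → g t = (n:ℤ) - 1 - i + k + t) := by
  -- nodewise nonnegativity
  have hP0 : ∀ j : ℕ, 1 ≤ j → j ≤ n-2 →
      0 ≤ cornerSign f j + cornerSign g (n-1-j) := by
    intro j hj1 hj2
    by_cases hq : g (n-1-j) = f j
    · have := hP j (f j) hj1 hj2
      rwa [if_pos rfl, if_pos hq] at this
    · have t1 := hP j (f j) hj1 hj2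
      rw [if_pos rfl, if_neg hq, add_zero] at t1
      have t2 := hP j (g (n-1-j)) hj1 hj2
      rw [if_pos rfl, if_neg (fun h => hq h.symm), zero_add] at t2
      omega
  -- pairing lemmas
  have hP1 : ∀ j : ℕ, 1 ≤ j → j ≤ n-2 → cornerSign f j = -1 →
      cornerSign g (n-1-j) = 1 ∧ g (n-1-j) = f j := by
    intro j hj1 hj2 hc
    by_cases hq : g (n-1-j) = f j
    · have := hP0 j hj1 hj2
      have hb := aux_corner_bound g (n-1-j)
      exact ⟨by omega, hq⟩
    · have := hP j (f j) hj1 hj2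
      rw [if_pos rfl, if_neg hq, add_zero, hc] at this
      omega
  have hP2 : ∀ t : ℕ, 1 ≤ t → t ≤ n-2 → cornerSign g t = -1 →
      cornerSign f (n-1-t) = 1 ∧ f (n-1-t) = g t := by
    intro t ht1 ht2 hc
    have hjj : n-1-(n-1-t) = t := by omega
    have hj1 : 1 ≤ n-1-t := by omega
    have hj2 : n-1-t ≤ n-2 := by omega
    by_cases hq : f (n-1-t) = g t
    · have := hP0 (n-1-t) hj1 hj2
      rw [hjj] at this
      have hb := aux_corner_bound f (n-1-t)
      exact ⟨by omega, hq⟩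
    · have := hP (n-1-t) (g t) hj1 hj2
      rw [hjj, if_neg hq, if_pos rfl, hc, zero_add] at this
      omega
  -- monotonicity of v
  have hV1 : ∀ j : ℕ, 1 ≤ j → j ≤ n-2 → auxV n f g (j-1) ≤ auxV n f g j := by
    intro j hj1 hj2
    have hj : j - 1 + 1 = j := by omega
    have h1 : f j = f (j-1) + 1 ∨ f j = f (j-1) - 1 := by
      have := hfs (j-1) (by omega)
      rwa [hj] at this
    have h2 := hfs j (by omega)
    have e1 := aux_two_corner f j h1 h2
    have hg1 : g (n-1-j) = g (n-1-j-1) + 1 ∨ g (n-1-j) = g (n-1-j-1) - 1 := by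
      have := hgs (n-1-j-1) (by omega)
      have hrw : n-1-j-1+1 = n-1-j := by omega
      rwa [hrw] at this
    have hg2 : g (n-1-j+1) = g (n-1-j) + 1 ∨ g (n-1-j+1) = g (n-1-j) - 1 :=
      hgs (n-1-j) (by omega)
    have e2 := aux_two_corner g (n-1-j) hg1 hg2
    have hnn := hP0 j hj1 hj2
    unfold auxV
    have r1 : n-1-(j-1) = n-1-j+1 := by omega
    have r2 : n-2-(j-1) = n-1-j := by omega
    have r3 : n-2-j = n-1-j-1 := by omega
    rw [hj, r1, r2, r3]
    omega
  have hV2 : ∀ x y : ℕ, x ≤ y → y ≤ n-2 → auxV n f g x ≤ auxV n f g y := by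
    intro x y hxy hy
    induction y, hxy using Nat.le_induction with
    | base => exact le_refl _
    | succ y hy' ih =>
      have h1 := ih (by omega)
      have h2 := hV1 (y+1) (by omega) hy
      rw [Nat.add_sub_cancel] at h2
      omega
  have hV4 : auxV n f g (n-2) ≤ 0 := by
    unfold auxV
    have r1 : n-2+1 = n-1 := by omega
    have r2 : n-1-(n-2) = 1 := by omega
    have r3 : n-2-(n-2) = 0 := by omega
    rw [r1, r2, r3]
    have hd1 : f (n-1) - f (n-2) = 1 ∨ f (n-1) - f (n-2) = -1 := by
      have := hfs (n-2) (by omega)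
      rw [r1] at this
      omega
    have hd2 : g 1 - g 0 = 1 ∨ g 1 - g 0 = -1 := by
      have := hgs 0 (by omega)
      simp only [zero_add] at this
      omega
    rcases hz with ⟨h, hb⟩ | ⟨h, hb1, hb2⟩ <;> omega
  -- flatness from a cancelling pair
  have hPairVal : ∀ j : ℕ, 1 ≤ j → j ≤ n-2 → auxV n f g j = 0 → f j = g (n-1-j) →
      f (n-1) = g 0 ∧ f j = g 0 := by
    intro j hj1 hj2 hv0 hq
    have hflat : ∀ x, j ≤ x → x ≤ n-2 → auxV n f g x = 0 := by
      intro x h1 h2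
      have a1 := hV2 j x h1 h2
      have a2 := hV2 x (n-2) h2 (le_refl _)
      omega
    have hS : ∀ x, j ≤ x → x ≤ n-1 → f x + g (n-1-x) = f j + g (n-1-j) := by
      intro x h1 h2
      induction x, h1 using Nat.le_induction with
      | base => rfl
      | succ y hy' ih =>
        have hv := hflat y hy' (by omega)
        unfold auxV at hv
        have r1 : n-1-(y+1) = n-2-y := by omega
        rw [r1]
        have := ih (by omega)
        omega
    have hSe := hS (n-1) (by omega) (le_refl _)
    have r0 : n-1-(n-1) = 0 := by omega
    rw [r0] at hSe
    have hvlast := hflat (n-2) (by omega) (le_refl _)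
    unfold auxV at hvlast
    have r1 : n-2+1 = n-1 := by omega
    have r2 : n-1-(n-2) = 1 := by omega
    have r3 : n-2-(n-2) = 0 := by omega
    rw [r1, r2, r3] at hvlast
    rcases hz with ⟨h, hb⟩ | ⟨h, hb1, hb2⟩
    · constructor
      · exact h
      · omega
    · omega
  -- cancelling pairs make v vanish
  have hVpair1 : ∀ j : ℕ, 1 ≤ j → j ≤ n-2 → cornerSign f j = -1 →
      cornerSign g (n-1-j) = 1 → auxV n f g j = 0 := by
    intro j hj1 hj2 hcf hcg
    obtain ⟨e1, e2⟩ := aux_corner_neg_elim f j hcf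
    obtain ⟨e3, e4⟩ := aux_corner_pos_elim g (n-1-j) hcg
    unfold auxV
    have r3 : n-2-j = n-1-j-1 := by omega
    rw [r3]
    omega
  have hVpair2 : ∀ j : ℕ, 1 ≤ j → j ≤ n-2 → cornerSign f j = 1 →
      cornerSign g (n-1-j) = -1 → auxV n f g j = 0 := by
    intro j hj1 hj2 hcf hcg
    obtain ⟨e1, e2⟩ := aux_corner_pos_elim f j hcf
    obtain ⟨e3, e4⟩ := aux_corner_neg_elim g (n-1-j) hcg
    unfold auxV
    have r3 : n-2-j = n-1-j-1 := by omega
    rw [r3]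
    omega
  -- no lower corner in g
  have hNLg : ∀ t : ℕ, 1 ≤ t → t ≤ n-2 → cornerSign g t ≠ -1 := by
    intro t ht1 ht2 hcg
    obtain ⟨hcf, hval⟩ := hP2 t ht1 ht2 hcg
    have hj1 : 1 ≤ n-1-t := by omega
    have hj2 : n-1-t ≤ n-2 := by omega
    have hjj : n-1-(n-1-t) = t := by omega
    have hv0 : auxV n f g (n-1-t) = 0 :=
      hVpair2 _ hj1 hj2 hcf (by rw [hjj]; exact hcg)
    have hpv := hPairVal (n-1-t) hj1 hj2 hv0 (by rw [hjj]; exact hval)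
    obtain ⟨ef1, ef2⟩ := aux_corner_pos_elim f (n-1-t) hcf
    obtain ⟨x, hx1, hx2, hmax⟩ := aux_max f (n-1-t) (n-1) (by omega)
    have hxx : f (n-1-t+1) ≤ f x := hmax (n-1-t+1) (by omega) (by omega)
    have hfx : g 0 + 1 ≤ f x := by
      have := hpv.2
      omega
    have hne1 : x ≠ n-1-t := by
      intro hh
      rw [hh] at hfx
      omega
    have hne2 : x ≠ n-1 := by
      intro hh
      rw [hh] at hfx
      omega
    have ha := hmax (x-1) (by omega) (by omega)
    have hb := hmax (x+1) (by omega) (by omega)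
    have s1 := hfs (x-1) (by omega)
    rw [show x-1+1 = x by omega] at s1
    have s2 := hfs x (by omega)
    have hc : cornerSign f x = -1 := aux_corner_neg f x (by omega) (by omega)
    obtain ⟨hcg2, hval2⟩ := hP1 x (by omega) (by omega) hc
    have hv0' := hVpair1 x (by omega) (by omega) hc hcg2
    have hpv2 := hPairVal x (by omega) (by omega) hv0' hval2.symm
    omega
  -- no lower corner in f
  have hNLf : ∀ j : ℕ, 1 ≤ j → j ≤ n-2 → cornerSign f j ≠ -1 := by
    intro j hj1 hj2 hcf
    obtain ⟨hcg, hval⟩ := hP1 j hj1 hj2 hcf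
    have hv0 := hVpair1 j hj1 hj2 hcf hcg
    have hpv := hPairVal j hj1 hj2 hv0 hval.symm
    obtain ⟨eg1, eg2⟩ := aux_corner_pos_elim g (n-1-j) hcg
    obtain ⟨t, ht1, ht2, hmax⟩ := aux_max g 0 (n-1-j) (by omega)
    have htt : g (n-1-j-1) ≤ g t := hmax (n-1-j-1) (by omega) (by omega)
    have hgt : g 0 + 1 ≤ g t := by
      have h1 := hpv.2
      omega
    have hne1 : t ≠ 0 := by
      intro hh
      rw [hh] at hgt
      omega
    have hne2 : t ≠ n-1-j := by
      intro hh
      rw [hh] at hgt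
      omega
    have ha := hmax (t-1) (by omega) (by omega)
    have hb := hmax (t+1) (by omega) (by omega)
    have s1 := hgs (t-1) (by omega)
    rw [show t-1+1 = t by omega] at s1
    have s2 := hgs t (by omega)
    have hc : cornerSign g t = -1 := aux_corner_neg g t (by omega) (by omega)
    exact hNLg t (by omega) (by omega) hc
  -- shapes
  have hnlf' : ∀ j, 1 ≤ j → j+1 ≤ n-1 → ¬(f j = f (j-1) + 1 ∧ f (j+1) = f j - 1) := by
    rintro j h1 h2 ⟨a1, a2⟩
    exact hNLf j h1 (by omega) (aux_corner_neg f j (by omega) a2)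
  have hnlg' : ∀ j, 1 ≤ j → j+1 ≤ n-1 → ¬(g j = g (j-1) + 1 ∧ g (j+1) = g j - 1) := by
    rintro j h1 h2 ⟨a1, a2⟩
    exact hNLg j h1 (by omega) (aux_corner_neg g j (by omega) a2)
  obtain ⟨a, haN, hfd, hfu⟩ := aux_shape (n-1) f hfs hnlf'
  obtain ⟨b, hbN, hgd, hgu⟩ := aux_shape (n-1) g hgs hnlg'
  have hfN : f (n-1) = f 0 - 2*(a:ℤ) + (n-1 : ℕ) := hfu (n-1) haN le_rfl
  have hgNv : g (n-1) = g 0 - 2*(b:ℤ) + (n-1 : ℕ) := hgu (n-1) hbN le_rfl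
  have hd1 : (a = n-1 ∧ f (n-1) - f (n-2) = -1) ∨ (a ≤ n-2 ∧ f (n-1) - f (n-2) = 1) := by
    by_cases ha : a = n-1
    · left
      refine ⟨ha, ?_⟩
      have e1 := hfd (n-1) (by omega)
      have e2 := hfd (n-2) (by omega)
      omega
    · right
      refine ⟨by omega, ?_⟩
      have e1 := hfu (n-1) (by omega) le_rfl
      have e2 := hfu (n-2) (by omega) (by omega)
      omega
  have hd2 : (b = 0 ∧ g 1 - g 0 = 1) ∨ (1 ≤ b ∧ g 1 - g 0 = -1) := by
    by_cases hb : b = 0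
    · left
      refine ⟨hb, ?_⟩
      have e1 := hgu 1 (by omega) (by omega)
      omega
    · right
      refine ⟨by omega, ?_⟩
      have e1 := hgd 1 (by omega)
      omega
  have hba : b = 0 ∧ a = i := by omega
  constructor
  · intro x hx
    by_cases hxi : x ≤ i
    · rw [hfd x (by omega), hf0, abs_of_nonpos (by omega)]
      omega
    · rw [hfu x (by omega) (by omega), hf0, abs_of_nonneg (by omega)]
      omega
  · intro t ht
    rw [hgu t (by omega) ht]
    omega

def auxPPlus (n i : ℕ) (k : ℤ) : (Fin n → ℤ) × (Fin n → ℤ) :=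
  (fun r => k + |(r:ℤ) - (i:ℤ)|, fun t => (n:ℤ) - 1 - (i:ℤ) + k + (t:ℤ))

lemma aux_pplus_fv (n i : ℕ) (k : ℤ) (hn : 1 ≤ n) :
    ∀ x, x ≤ n-1 → seqOf (auxPPlus n i k).1 x = k + |(x:ℤ) - (i:ℤ)| := by
  intro x hx
  rw [aux_seqOf_lt _ (show x < n by omega)]
  simp [auxPPlus]

lemma aux_pplus_gv (n i : ℕ) (k : ℤ) (hn : 1 ≤ n) :
    ∀ t, t ≤ n-1 → seqOf (auxPPlus n i k).2 t = (n:ℤ) - 1 - (i:ℤ) + k + (t:ℤ) := by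
  intro t ht
  rw [aux_seqOf_lt _ (show t < n by omega)]
  simp [auxPPlus]

lemma aux_eval (n i : ℕ) (k : ℤ) (hn : 4 ≤ n) (hi1 : 1 ≤ i) (hi2 : i ≤ n-2)
    (LR : (Fin n → ℤ) × (Fin n → ℤ))
    (hfv : ∀ x, x ≤ n-1 → seqOf LR.1 x = k + |(x:ℤ) - (i:ℤ)|)
    (hgv : ∀ t, t ≤ n-1 → seqOf LR.2 t = (n:ℤ) - 1 - (i:ℤ) + k + (t:ℤ)) :
    mMon n LR = {Finsupp.single ((i:ℕ), k) (1:ℤ)} := by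
  have hfv' : ∀ x, x ≤ n-1 →
      (x ≤ i → seqOf LR.1 x = k + (i:ℤ) - x) ∧ (i ≤ x → seqOf LR.1 x = k + (x:ℤ) - i) := by
    intro x hx
    constructor
    · intro h
      rw [hfv x hx, abs_of_nonpos (by omega)]
      ring
    · intro h
      rw [hfv x hx, abs_of_nonneg (by omega)]
      ring
  have hcf : ∀ j, 1 ≤ j → j ≤ n-2 →
      cornerSign (seqOf LR.1) j = if j = i then 1 else 0 := by
    intro j h1 h2
    have e1 := hfv' (j-1) (by omega)
    have e2 := hfv' j (by omega)
    have e3 := hfv' (j+1) (by omega)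
    rcases lt_trichotomy j i with h | h | h
    · rw [if_neg (by omega)]
      have v1 := e1.1 (by omega)
      have v2 := e2.1 (by omega)
      have v3 := e3.1 (by omega)
      exact aux_corner_zero _ j (by omega) (by omega)
    · rw [if_pos h]
      have v1 := e1.1 (by omega)
      have v2 := e2.1 (by omega)
      have v3 := e3.2 (by omega)
      exact aux_corner_pos _ j (by omega) (by omega)
    · rw [if_neg (by omega)]
      have v1 := e1.2 (by omega)
      have v2 := e2.2 (by omega)
      have v3 := e3.2 (by omega)
      exact aux_corner_zero _ j (by omega) (by omega)
  have hcg : ∀ t, 1 ≤ t → t ≤ n-2 → cornerSign (seqOf LR.2) t = 0 := by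
    intro t h1 h2
    have v1 := hgv (t-1) (by omega)
    have v2 := hgv t (by omega)
    have v3 := hgv (t+1) (by omega)
    exact aux_corner_zero _ t (by omega) (by omega)
  have hbase : baseMon n LR = Finsupp.single ((i:ℕ), k) (1:ℤ) := by
    have hright : (∑ r ∈ Finset.Icc 1 (n-2),
        cornerSign (seqOf LR.2) r • Finsupp.single ((n-1-r : ℕ), seqOf LR.2 r) (1:ℤ)) = 0 := by
      apply Finset.sum_eq_zero
      intro r hr
      simp only [Finset.mem_Icc] at hr
      rw [hcg r hr.1 hr.2, zero_smul]
    have hleft : (∑ r ∈ Finset.Icc 1 (n-2),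
        cornerSign (seqOf LR.1) r • Finsupp.single ((r : ℕ), seqOf LR.1 r) (1:ℤ)) =
        Finsupp.single ((i:ℕ), k) (1:ℤ) := by
      rw [Finset.sum_eq_single_of_mem i (Finset.mem_Icc.mpr ⟨hi1, hi2⟩)]
      · have hik : seqOf LR.1 i = k := by
          have := (hfv' i (by omega)).1 le_rfl
          omega
        rw [hcf i hi1 hi2, if_pos rfl, hik, one_smul]
      · intro r hr hrne
        simp only [Finset.mem_Icc] at hr
        rw [hcf r hr.1 hr.2, if_neg hrne, zero_smul]
    unfold baseMon
    rw [hleft, hright, add_zero]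
  have E1 : seqOf LR.1 (n-1) = seqOf LR.2 0 := by
    have u := (hfv' (n-1) le_rfl).2 (by omega)
    have v := hgv 0 (by omega)
    omega
  have E2 : seqOf LR.1 (n-1) - seqOf LR.1 (n-2) = 1 := by
    have u1 := (hfv' (n-1) le_rfl).2 (by omega)
    have u2 := (hfv' (n-2) (by omega)).2 (by omega)
    omega
  have E3 : seqOf LR.2 1 - seqOf LR.2 0 = 1 := by
    have u1 := hgv 1 (by omega)
    have u2 := hgv 0 (by omega)
    omega
  have hzM : zMon n LR = {0} := by
    unfold zMon
    dsimp only
    rw [if_pos E1, if_neg (by omega), if_neg (by omega)]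
  unfold mMon
  rw [hzM, hbase, Multiset.map_singleton, add_zero]

lemma aux_pc_plus (n i : ℕ) (k : ℤ) (hn : 4 ≤ n) (hi1 : 1 ≤ i) (hi2 : i ≤ n-2) :
    PathCond n i k (auxPPlus n i k) := by
  have hfv := aux_pplus_fv n i k (by omega)
  have hgv := aux_pplus_gv n i k (by omega)
  refine ⟨?_, ?_, ?_, ?_, ?_⟩
  · intro j hj
    have v1 := hfv j (by omega)
    have v2 := hfv (j+1) (by omega)
    rcases Nat.lt_or_ge j i with h | h
    · rw [abs_of_nonpos (by omega)] at v1
      rw [abs_of_nonpos (by omega)] at v2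
      omega
    · rw [abs_of_nonneg (by omega)] at v1
      rw [abs_of_nonneg (by omega)] at v2
      omega
  · intro j hj
    have v1 := hgv j (by omega)
    have v2 := hgv (j+1) (by omega)
    omega
  · have v := hfv 0 (by omega)
    rw [abs_of_nonpos (by omega)] at v
    simp only [Nat.cast_zero] at v
    omega
  · have v := hgv (n-1) le_rfl
    omega
  · have v1 := hgv 0 (by omega)
    have v2 := hfv (n-1) le_rfl
    rw [abs_of_nonneg (by omega)] at v2
    omega

lemma aux_main_dom (n i : ℕ) (k : ℤ) (hn : 4 ≤ n) (hi1 : 1 ≤ i) (hi2 : i ≤ n-2)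
    (LR : (Fin n → ℤ) × (Fin n → ℤ)) (hpc : PathCond n i k LR) (e : ExpVec)
    (he : e ∈ mMon n LR) (hdom : Dominant e) :
    LR = auxPPlus n i k ∧ e = Finsupp.single ((i:ℕ), k) (1:ℤ) := by
  obtain ⟨hL, hR, hL0, hRN, hfold⟩ := hpc
  obtain ⟨z, hz, hez⟩ := Multiset.mem_map.mp he
  have hfs : ∀ x, x+1 ≤ n-1 →
      seqOf LR.1 (x+1) = seqOf LR.1 x + 1 ∨ seqOf LR.1 (x+1) = seqOf LR.1 x - 1 :=
    fun x hx => hL x (by omega)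
  have hgs : ∀ x, x+1 ≤ n-1 →
      seqOf LR.2 (x+1) = seqOf LR.2 x + 1 ∨ seqOf LR.2 (x+1) = seqOf LR.2 x - 1 :=
    fun x hx => hR x (by omega)
  have hd1 : seqOf LR.1 (n-1) - seqOf LR.1 (n-2) = 1 ∨
      seqOf LR.1 (n-1) - seqOf LR.1 (n-2) = -1 := by
    have := hfs (n-2) (by omega)
    rw [show n-2+1 = n-1 by omega] at this
    omega
  have hd2 : seqOf LR.2 1 - seqOf LR.2 0 = 1 ∨ seqOf LR.2 1 - seqOf LR.2 0 = -1 := by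
    have := hgs 0 (by omega)
    simp only [zero_add] at this
    omega
  have hzc := aux_z_dom n hn LR z hz e hez.symm hdom hd1 hd2
  have hP : ∀ j : ℕ, ∀ ℓ : ℤ, 1 ≤ j → j ≤ n-2 →
      0 ≤ (if seqOf LR.1 j = ℓ then cornerSign (seqOf LR.1) j else 0) +
          (if seqOf LR.2 (n-1-j) = ℓ then cornerSign (seqOf LR.2) (n-1-j) else 0) := by
    intro j ℓ h1 h2
    have hdj : (0:ℤ) ≤ (baseMon n LR + z) (j, ℓ) := by
      rw [hez]
      exact hdom (j, ℓ)
    rwa [Finsupp.add_apply, aux_z_apply_low n LR z hz j ℓ h2 (by omega), add_zero,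
      aux_base_apply n LR j ℓ h1 h2] at hdj
  obtain ⟨hfv, hgv⟩ := aux_core n i k hn hi1 hi2 (seqOf LR.1) (seqOf LR.2)
    hfs hgs hL0 hRN hfold hP hzc
  have hLR : LR = auxPPlus n i k := by
    obtain ⟨L, R⟩ := LR
    simp only [auxPPlus, Prod.mk.injEq]
    constructor
    · funext r
      have := hfv r.val (by omega)
      rw [aux_seqOf_lt _ r.isLt] at this
      simpa using this
    · funext t
      have := hgv t.val (by omega)
      rw [aux_seqOf_lt _ t.isLt] at this
      simpa using this
  refine ⟨hLR, ?_⟩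
  rw [aux_eval n i k hn hi1 hi2 LR hfv hgv] at he
  exact Multiset.mem_singleton.mp he

lemma aux_corner_zero_elim (f : ℕ → ℤ) (x : ℕ) (h : cornerSign f x = 0) :
    ¬(f (x-1) = f x + 1 ∧ f (x+1) = f x + 1) ∧ ¬(f (x-1) = f x - 1 ∧ f (x+1) = f x - 1) := by
  constructor
  · intro hA
    rw [aux_corner_pos f x hA.1 hA.2] at h
    omega
  · intro hB
    rw [aux_corner_neg f x hB.1 hB.2] at h
    omega

def auxFlipD : (ℕ × ℤ) ≃ (ℕ × ℤ) where
  toFun x := (x.1, -x.2)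
  invFun x := (x.1, -x.2)
  left_inv x := by simp
  right_inv x := by simp

noncomputable def auxFlip (e : ExpVec) : ExpVec := -(Finsupp.domCongr (M := ℤ) auxFlipD e)

lemma auxFlip_add (x y : ExpVec) : auxFlip (x + y) = auxFlip x + auxFlip y := by
  unfold auxFlip
  rw [map_add]
  abel

lemma auxFlip_zero : auxFlip 0 = 0 := by
  unfold auxFlip
  rw [map_zero, neg_zero]

lemma auxFlip_single (a : ℕ) (b v : ℤ) :
    auxFlip (Finsupp.single (a, b) v) = Finsupp.single (a, -b) (-v) := by
  unfold auxFlip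
  rw [show Finsupp.domCongr (M := ℤ) auxFlipD (Finsupp.single (a,b) v)
      = Finsupp.equivMapDomain auxFlipD (Finsupp.single (a,b) v) from rfl,
    Finsupp.equivMapDomain_single]
  rw [← Finsupp.single_neg]
  rfl

lemma auxFlip_apply (e : ExpVec) (a : ℕ) (b : ℤ) :
    auxFlip e (a, b) = -(e (a, -b)) := by
  unfold auxFlip
  rw [Finsupp.neg_apply]
  congr 1

lemma auxFlip_invol (e : ExpVec) : auxFlip (auxFlip e) = e := by
  ext x
  obtain ⟨a, b⟩ := x
  rw [auxFlip_apply, auxFlip_apply, neg_neg, neg_neg]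

lemma aux_dom_flip (e : ExpVec) (h : AntiDominant e) : Dominant (auxFlip e) := by
  intro x
  obtain ⟨a, b⟩ := x
  rw [auxFlip_apply]
  have := h (a, -b)
  omega

def auxTr {n : ℕ} (LR : (Fin n → ℤ) × (Fin n → ℤ)) : (Fin n → ℤ) × (Fin n → ℤ) :=
  (fun r => -(LR.2 r.rev), fun t => -(LR.1 t.rev))

lemma auxTr_seq1 {n : ℕ} (LR : (Fin n → ℤ) × (Fin n → ℤ)) (m : ℕ) (hm : m < n) :
    seqOf (auxTr LR).1 m = -(seqOf LR.2 (n-1-m)) := by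
  rw [aux_seqOf_lt _ hm, aux_seqOf_lt _ (show n-1-m < n by omega)]
  show -(LR.2 (Fin.rev ⟨m, hm⟩)) = _
  have hrev : (Fin.rev (⟨m, hm⟩ : Fin n)) = ⟨n-1-m, by omega⟩ := by
    apply Fin.ext
    rw [Fin.val_rev]
    simp only [Fin.val_mk]
    omega
  rw [hrev]

lemma auxTr_seq2 {n : ℕ} (LR : (Fin n → ℤ) × (Fin n → ℤ)) (m : ℕ) (hm : m < n) :
    seqOf (auxTr LR).2 m = -(seqOf LR.1 (n-1-m)) := by
  rw [aux_seqOf_lt _ hm, aux_seqOf_lt _ (show n-1-m < n by omega)]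
  show -(LR.1 (Fin.rev ⟨m, hm⟩)) = _
  have hrev : (Fin.rev (⟨m, hm⟩ : Fin n)) = ⟨n-1-m, by omega⟩ := by
    apply Fin.ext
    rw [Fin.val_rev]
    simp only [Fin.val_mk]
    omega
  rw [hrev]

lemma auxTr_invol {n : ℕ} (LR : (Fin n → ℤ) × (Fin n → ℤ)) : auxTr (auxTr LR) = LR := by
  unfold auxTr
  simp [Fin.rev_rev]

lemma aux_corner_tr1 (n : ℕ) (hn : 4 ≤ n) (LR : (Fin n → ℤ) × (Fin n → ℤ))
    (r : ℕ) (h1 : 1 ≤ r) (h2 : r ≤ n-2) :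
    cornerSign (seqOf (auxTr LR).1) r = - cornerSign (seqOf LR.2) (n-1-r) := by
  have E0 : seqOf (auxTr LR).1 r = -(seqOf LR.2 (n-1-r)) := auxTr_seq1 LR r (by omega)
  have E1 : seqOf (auxTr LR).1 (r-1) = -(seqOf LR.2 (n-1-r+1)) := by
    have := auxTr_seq1 LR (r-1) (by omega)
    rw [show n-1-(r-1) = n-1-r+1 by omega] at this
    exact this
  have E2 : seqOf (auxTr LR).1 (r+1) = -(seqOf LR.2 (n-1-r-1)) := by
    have := auxTr_seq1 LR (r+1) (by omega)
    rw [show n-1-(r+1) = n-1-r-1 by omega] at this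
    exact this
  rcases aux_corner_cases (seqOf LR.2) (n-1-r) with ⟨hc, u1, u2⟩ | ⟨hc, u1, u2⟩ | hc
  · rw [hc, aux_corner_neg _ r (by omega) (by omega)]
  · rw [hc, aux_corner_pos _ r (by omega) (by omega)]
    omega
  · obtain ⟨hA, hB⟩ := aux_corner_zero_elim _ _ hc
    rw [hc, neg_zero]
    apply aux_corner_zero
    · rintro ⟨u1, u2⟩
      exact hB ⟨by omega, by omega⟩
    · rintro ⟨u1, u2⟩
      exact hA ⟨by omega, by omega⟩

lemma aux_corner_tr2 (n : ℕ) (hn : 4 ≤ n) (LR : (Fin n → ℤ) × (Fin n → ℤ))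
    (r : ℕ) (h1 : 1 ≤ r) (h2 : r ≤ n-2) :
    cornerSign (seqOf (auxTr LR).2) r = - cornerSign (seqOf LR.1) (n-1-r) := by
  have E0 : seqOf (auxTr LR).2 r = -(seqOf LR.1 (n-1-r)) := auxTr_seq2 LR r (by omega)
  have E1 : seqOf (auxTr LR).2 (r-1) = -(seqOf LR.1 (n-1-r+1)) := by
    have := auxTr_seq2 LR (r-1) (by omega)
    rw [show n-1-(r-1) = n-1-r+1 by omega] at this
    exact this
  have E2 : seqOf (auxTr LR).2 (r+1) = -(seqOf LR.1 (n-1-r-1)) := by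
    have := auxTr_seq2 LR (r+1) (by omega)
    rw [show n-1-(r+1) = n-1-r-1 by omega] at this
    exact this
  rcases aux_corner_cases (seqOf LR.1) (n-1-r) with ⟨hc, u1, u2⟩ | ⟨hc, u1, u2⟩ | hc
  · rw [hc, aux_corner_neg _ r (by omega) (by omega)]
  · rw [hc, aux_corner_pos _ r (by omega) (by omega)]
    omega
  · obtain ⟨hA, hB⟩ := aux_corner_zero_elim _ _ hc
    rw [hc, neg_zero]
    apply aux_corner_zero
    · rintro ⟨u1, u2⟩
      exact hB ⟨by omega, by omega⟩
    · rintro ⟨u1, u2⟩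
      exact hA ⟨by omega, by omega⟩

lemma auxFlip_sum {ι : Type*} (s : Finset ι) (F : ι → ExpVec) :
    auxFlip (∑ r ∈ s, F r) = ∑ r ∈ s, auxFlip (F r) := by
  unfold auxFlip
  rw [map_sum, Finset.sum_neg_distrib]

lemma auxFlip_smul_single (c : ℤ) (a : ℕ) (b : ℤ) :
    auxFlip (c • Finsupp.single (a, b) (1:ℤ)) = (-c) • Finsupp.single (a, -b) (1:ℤ) := by
  rw [Finsupp.smul_single', mul_one, auxFlip_single, Finsupp.smul_single', mul_one]

lemma aux_tr_base (n : ℕ) (hn : 4 ≤ n) (LR : (Fin n → ℤ) × (Fin n → ℤ)) :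
    baseMon n (auxTr LR) = auxFlip (baseMon n LR) := by
  unfold baseMon
  rw [auxFlip_add, auxFlip_sum, auxFlip_sum]
  have hL : (∑ r ∈ Finset.Icc 1 (n-2),
      cornerSign (seqOf (auxTr LR).1) r • Finsupp.single ((r:ℕ), seqOf (auxTr LR).1 r) (1:ℤ)) =
      ∑ r ∈ Finset.Icc 1 (n-2),
        auxFlip (cornerSign (seqOf LR.2) r • Finsupp.single ((n-1-r : ℕ), seqOf LR.2 r) (1:ℤ)) := by
    apply Finset.sum_bij' (fun t _ => n-1-t) (fun r _ => n-1-r)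
    · intro a ha
      simp only [Finset.mem_Icc] at *
      omega
    · intro a ha
      simp only [Finset.mem_Icc] at *
      omega
    · intro a ha
      simp only [Finset.mem_Icc] at ha
      omega
    · intro a ha
      simp only [Finset.mem_Icc] at ha
      omega
    · intro a ha
      simp only [Finset.mem_Icc] at ha
      rw [auxFlip_smul_single, aux_corner_tr1 n hn LR a ha.1 ha.2,
        auxTr_seq1 LR a (by omega), show n-1-(n-1-a) = a by omega]
  have hR : (∑ r ∈ Finset.Icc 1 (n-2),
      cornerSign (seqOf (auxTr LR).2) r • Finsupp.single ((n-1-r : ℕ), seqOf (auxTr LR).2 r) (1:ℤ)) =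
      ∑ r ∈ Finset.Icc 1 (n-2),
        auxFlip (cornerSign (seqOf LR.1) r • Finsupp.single ((r:ℕ), seqOf LR.1 r) (1:ℤ)) := by
    apply Finset.sum_bij' (fun t _ => n-1-t) (fun r _ => n-1-r)
    · intro a ha
      simp only [Finset.mem_Icc] at *
      omega
    · intro a ha
      simp only [Finset.mem_Icc] at *
      omega
    · intro a ha
      simp only [Finset.mem_Icc] at ha
      omega
    · intro a ha
      simp only [Finset.mem_Icc] at ha
      omega
    · intro a ha
      simp only [Finset.mem_Icc] at ha
      rw [auxFlip_smul_single, aux_corner_tr2 n hn LR a ha.1 ha.2,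
        auxTr_seq2 LR a (by omega)]
  rw [hL, hR, add_comm]

lemma aux_tr_z (n : ℕ) (hn : 4 ≤ n) (LR : (Fin n → ℤ) × (Fin n → ℤ)) :
    zMon n (auxTr LR) = (zMon n LR).map auxFlip := by
  have Ea : seqOf (auxTr LR).1 (n-1) = -(seqOf LR.2 0) := by
    have := auxTr_seq1 LR (n-1) (by omega)
    rwa [show n-1-(n-1) = 0 by omega] at this
  have Eb : seqOf (auxTr LR).2 0 = -(seqOf LR.1 (n-1)) := by
    have := auxTr_seq2 LR 0 (by omega)
    rwa [show n-1-0 = n-1 by omega] at this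
  have Ec : seqOf (auxTr LR).1 (n-2) = -(seqOf LR.2 1) := by
    have := auxTr_seq1 LR (n-2) (by omega)
    rwa [show n-1-(n-2) = 1 by omega] at this
  have Ed : seqOf (auxTr LR).2 1 = -(seqOf LR.1 (n-2)) := by
    have := auxTr_seq2 LR 1 (by omega)
    rwa [show n-1-1 = n-2 by omega] at this
  unfold zMon
  dsimp only
  rw [Ea, Eb, Ec, Ed]
  by_cases hh : seqOf LR.1 (n-1) = seqOf LR.2 0
  · rw [if_pos (show -(seqOf LR.2 0) = -(seqOf LR.1 (n-1)) by rw [hh]), if_pos hh]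
    by_cases hc2 : seqOf LR.1 (n-1) - seqOf LR.1 (n-2) = 1 ∧ seqOf LR.2 1 - seqOf LR.2 0 = -1
    · rw [if_pos (by constructor <;> omega), if_neg (by omega), if_pos hc2,
        Multiset.map_singleton]
      congr 1
      have hrw : -(Finsupp.single ((n-1:ℕ), seqOf LR.1 (n-1)) (1:ℤ)) -
          Finsupp.single ((n:ℕ), seqOf LR.1 (n-1)) (1:ℤ) =
          Finsupp.single ((n-1:ℕ), seqOf LR.1 (n-1)) (-1:ℤ) +
          Finsupp.single ((n:ℕ), seqOf LR.1 (n-1)) (-1:ℤ) := by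
        rw [Finsupp.single_neg, Finsupp.single_neg]
        abel
      rw [hrw, auxFlip_add, auxFlip_single, auxFlip_single, neg_neg, hh]
    · by_cases hc1 : seqOf LR.1 (n-1) - seqOf LR.1 (n-2) = -1 ∧ seqOf LR.2 1 - seqOf LR.2 0 = 1
      · rw [if_neg (by omega), if_pos (by constructor <;> omega), if_pos hc1,
          Multiset.map_singleton]
        congr 1
        rw [auxFlip_add, auxFlip_single, auxFlip_single, hh,
          Finsupp.single_neg, Finsupp.single_neg]
        abel
      · rw [if_neg (by omega), if_neg (by omega), if_neg hc1, if_neg hc2,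
          Multiset.map_singleton, auxFlip_zero]
  · rw [if_neg (show ¬(-(seqOf LR.2 0) = -(seqOf LR.1 (n-1))) by omega), if_neg hh,
      show -(seqOf LR.2 0) - -(seqOf LR.1 (n-1)) = seqOf LR.1 (n-1) - seqOf LR.2 0 by ring]
    by_cases hC : (seqOf LR.1 (n-1) - seqOf LR.1 (n-2) = seqOf LR.2 1 - seqOf LR.2 0 ∧
        (seqOf LR.1 (n-1) - seqOf LR.2 0) % 4 = 2) ∨
        (seqOf LR.1 (n-1) - seqOf LR.1 (n-2) ≠ seqOf LR.2 1 - seqOf LR.2 0 ∧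
        (seqOf LR.1 (n-1) - seqOf LR.2 0) % 4 = 0)
    · rw [if_pos (by omega), if_pos hC]
      rw [show ({(((-(seqOf LR.1 (n-2)) - -(seqOf LR.1 (n-1))) •
          Finsupp.single ((n-1:ℕ), -(seqOf LR.1 (n-1))) (1:ℤ)) +
          (-((-(seqOf LR.2 0)) - -(seqOf LR.2 1))) •
          Finsupp.single ((n:ℕ), -(seqOf LR.2 0)) (1:ℤ)),
          (((-(seqOf LR.1 (n-2)) - -(seqOf LR.1 (n-1))) •
          Finsupp.single ((n:ℕ), -(seqOf LR.1 (n-1))) (1:ℤ)) +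
          (-((-(seqOf LR.2 0)) - -(seqOf LR.2 1))) •
          Finsupp.single ((n-1:ℕ), -(seqOf LR.2 0)) (1:ℤ))} : Multiset ExpVec) =
          {auxFlip ((seqOf LR.2 1 - seqOf LR.2 0) •
            Finsupp.single ((n:ℕ), seqOf LR.2 0) (1:ℤ) +
            (-(seqOf LR.1 (n-1) - seqOf LR.1 (n-2))) •
            Finsupp.single ((n-1:ℕ), seqOf LR.1 (n-1)) (1:ℤ)),
           auxFlip ((seqOf LR.2 1 - seqOf LR.2 0) •
            Finsupp.single ((n-1:ℕ), seqOf LR.2 0) (1:ℤ) +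
            (-(seqOf LR.1 (n-1) - seqOf LR.1 (n-2))) •
            Finsupp.single ((n:ℕ), seqOf LR.1 (n-1)) (1:ℤ))} from ?_]
      · simp only [Multiset.insert_eq_cons, Multiset.map_cons, Multiset.map_singleton]
        exact Multiset.pair_comm _ _
      · congr 1
        · rw [auxFlip_add, auxFlip_smul_single, auxFlip_smul_single, add_comm]
          module
        · congr 1
          rw [auxFlip_add, auxFlip_smul_single, auxFlip_smul_single, add_comm]
          module
    · rw [if_neg (by omega), if_neg hC]
      simp only [Multiset.insert_eq_cons, Multiset.map_cons, Multiset.map_singleton]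
      congr 1
      · rw [auxFlip_add, auxFlip_smul_single, auxFlip_smul_single, add_comm]
        module
      · congr 1
        rw [auxFlip_add, auxFlip_smul_single, auxFlip_smul_single, add_comm]
        module

lemma aux_tr_mMon (n : ℕ) (hn : 4 ≤ n) (LR : (Fin n → ℤ) × (Fin n → ℤ)) :
    mMon n (auxTr LR) = (mMon n LR).map auxFlip := by
  unfold mMon
  rw [aux_tr_z n hn LR, aux_tr_base n hn LR, Multiset.map_map, Multiset.map_map]
  apply Multiset.map_congr rfl
  intro z hz
  simp only [Function.comp_apply]
  rw [auxFlip_add]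

lemma aux_tr_pc (n i : ℕ) (k : ℤ) (hn : 4 ≤ n) (LR : (Fin n → ℤ) × (Fin n → ℤ))
    (hpc : PathCond n i k LR) : PathCond n i (-(2*(n:ℤ)) + 2 - k) (auxTr LR) := by
  obtain ⟨hL, hR, hL0, hRN, hfold⟩ := hpc
  refine ⟨?_, ?_, ?_, ?_, ?_⟩
  · intro j hj
    rw [auxTr_seq1 LR (j+1) (by omega), auxTr_seq1 LR j (by omega),
      show n-1-(j+1) = n-2-j by omega]
    have := hR (n-2-j) (by omega)
    rw [show n-2-j+1 = n-1-j by omega] at this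
    omega
  · intro j hj
    rw [auxTr_seq2 LR (j+1) (by omega), auxTr_seq2 LR j (by omega),
      show n-1-(j+1) = n-2-j by omega]
    have := hL (n-2-j) (by omega)
    rw [show n-2-j+1 = n-1-j by omega] at this
    omega
  · rw [auxTr_seq1 LR 0 (by omega), show n-1-0 = n-1 by omega]
    omega
  · rw [auxTr_seq2 LR (n-1) (by omega), show n-1-(n-1) = 0 by omega]
    omega
  · rw [auxTr_seq2 LR 0 (by omega), auxTr_seq1 LR (n-1) (by omega),
      show n-1-0 = n-1 by omega, show n-1-(n-1) = 0 by omega]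
    omega

lemma aux_main_anti (n i : ℕ) (k : ℤ) (hn : 4 ≤ n) (hi1 : 1 ≤ i) (hi2 : i ≤ n-2)
    (LR : (Fin n → ℤ) × (Fin n → ℤ)) (hpc : PathCond n i k LR) (e : ExpVec)
    (he : e ∈ mMon n LR) (hanti : AntiDominant e) :
    LR = auxTr (auxPPlus n i (-(2*(n:ℤ)) + 2 - k)) ∧
      e = Finsupp.single ((i:ℕ), 2*(n:ℤ) - 2 + k) (-1:ℤ) := by
  have hpc' := aux_tr_pc n i k hn LR hpc
  have he' : auxFlip e ∈ mMon n (auxTr LR) := by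
    rw [aux_tr_mMon n hn LR]
    exact Multiset.mem_map_of_mem _ he
  have hdom' := aux_dom_flip e hanti
  obtain ⟨hp', he''⟩ := aux_main_dom n i (-(2*(n:ℤ)) + 2 - k) hn hi1 hi2
    (auxTr LR) hpc' (auxFlip e) he' hdom'
  constructor
  · have := congrArg auxTr hp'
    rwa [auxTr_invol] at this
  · have := congrArg auxFlip he''
    rw [auxFlip_invol, auxFlip_single] at this
    rw [this, show -(-(2*(n:ℤ)) + 2 - k) = 2*(n:ℤ) - 2 + k by ring]

lemma aux_dom_single (a : ℕ × ℤ) : Dominant (Finsupp.single a (1:ℤ)) := by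
  intro x
  rw [Finsupp.single_apply]
  split <;> norm_num

lemma aux_anti_single (a : ℕ × ℤ) : AntiDominant (Finsupp.single a (-1:ℤ)) := by
  intro x
  rw [Finsupp.single_apply]
  split <;> norm_num

lemma aux_mMon_minus (n i : ℕ) (k : ℤ) (hn : 4 ≤ n) (hi1 : 1 ≤ i) (hi2 : i ≤ n-2) :
    mMon n (auxTr (auxPPlus n i (-(2*(n:ℤ)) + 2 - k)))
      = {Finsupp.single ((i:ℕ), 2*(n:ℤ) - 2 + k) (-1:ℤ)} := by
  rw [aux_tr_mMon n hn _,
    aux_eval n i (-(2*(n:ℤ)) + 2 - k) hn hi1 hi2 _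
      (aux_pplus_fv n i _ (by omega)) (aux_pplus_gv n i _ (by omega)),
    Multiset.map_singleton, auxFlip_single,
    show -(-(2*(n:ℤ)) + 2 - k) = 2*(n:ℤ) - 2 + k by ring]

lemma aux_pc_minus (n i : ℕ) (k : ℤ) (hn : 4 ≤ n) (hi1 : 1 ≤ i) (hi2 : i ≤ n-2) :
    PathCond n i k (auxTr (auxPPlus n i (-(2*(n:ℤ)) + 2 - k))) := by
  have := aux_tr_pc n i (-(2*(n:ℤ)) + 2 - k) hn _
    (aux_pc_plus n i (-(2*(n:ℤ)) + 2 - k) hn hi1 hi2)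
  rwa [show -(2*(n:ℤ)) + 2 - (-(2*(n:ℤ)) + 2 - k) = k by ring] at this

/-- Section 5: among the monomials `m(p)`, `p ∈ 𝒫_{i,k}` (for `1 ≤ i ≤ n-2`, `i - k`
odd), there is exactly one dominant monomial, namely `Y_{i,k}`, arising from a unique
path (the highest path `p⁺_{i,k}`), and exactly one anti-dominant monomial, namely
`Y^{-1}_{i,2n-2+k}`, arising from a unique path (the lowest path `p⁻_{i,k}`). -/
theorem statement17 (n i : ℕ) (k : ℤ) (hn : 4 ≤ n) (hi1 : 1 ≤ i) (hi2 : i ≤ n - 2)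
    (hik : Odd ((i : ℤ) - k)) :
    (∃! p : {LR : (Fin n → ℤ) × (Fin n → ℤ) // PathCond n i k LR},
      Finsupp.single ((i : ℕ), k) (1 : ℤ) ∈ mMon n p.1) ∧
    (∀ (p : {LR : (Fin n → ℤ) × (Fin n → ℤ) // PathCond n i k LR}) (e : ExpVec),
      e ∈ mMon n p.1 → Dominant e → e = Finsupp.single ((i : ℕ), k) (1 : ℤ)) ∧
    (∃! p : {LR : (Fin n → ℤ) × (Fin n → ℤ) // PathCond n i k LR},
      Finsupp.single ((i : ℕ), 2 * (n : ℤ) - 2 + k) (-1 : ℤ) ∈ mMon n p.1) ∧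
    (∀ (p : {LR : (Fin n → ℤ) × (Fin n → ℤ) // PathCond n i k LR}) (e : ExpVec),
      e ∈ mMon n p.1 → AntiDominant e →
        e = Finsupp.single ((i : ℕ), 2 * (n : ℤ) - 2 + k) (-1 : ℤ)) := by
  constructor
  · refine ⟨⟨auxPPlus n i k, aux_pc_plus n i k hn hi1 hi2⟩, ?_, ?_⟩
    · show Finsupp.single ((i:ℕ), k) (1:ℤ) ∈ mMon n (auxPPlus n i k)
      rw [aux_eval n i k hn hi1 hi2 _ (aux_pplus_fv n i k (by omega))
        (aux_pplus_gv n i k (by omega))]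
      exact Multiset.mem_singleton_self _
    · rintro ⟨q, hq⟩ hmem
      exact Subtype.ext
        (aux_main_dom n i k hn hi1 hi2 q hq _ hmem (aux_dom_single _)).1
  refine ⟨?_, ?_, ?_⟩
  · intro p e he hdom
    exact (aux_main_dom n i k hn hi1 hi2 p.1 p.2 e he hdom).2
  · refine ⟨⟨auxTr (auxPPlus n i (-(2*(n:ℤ)) + 2 - k)),
      aux_pc_minus n i k hn hi1 hi2⟩, ?_, ?_⟩
    · show Finsupp.single ((i:ℕ), 2*(n:ℤ) - 2 + k) (-1:ℤ) ∈ _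
      rw [aux_mMon_minus n i k hn hi1 hi2]
      exact Multiset.mem_singleton_self _
    · rintro ⟨q, hq⟩ hmem
      exact Subtype.ext
        (aux_main_anti n i k hn hi1 hi2 q hq _ hmem (aux_anti_single _)).1
  · intro p e he hanti
    exact (aux_main_anti n i k hn hi1 hi2 p.1 p.2 e he hanti).2
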